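/- If there exists an overlap between two perfect paths p and q in a monomial algebra Λ, then the underlying cycles c_p and c_q are equivalent (i.e., each is a subpath of some power of the other, equivalently they agree up to cyclic permutation). -/

import Mathlib

/-! Combinatorial model of a monomial algebra `Λ = KQ/I`.

A finite quiver is given by source and target maps on a type of arrows.
A (nontrivial) path is encoded as a nonempty list of composable arrows;
the admissible monomial ideal `I` is encoded by its set `F` of minimal
generating paths, and a path is zero in `Λ` iff it contains a member of
`F` as a contiguous subpath (infix). -/

/-- A quiver structure on arrow type `E` with vertex type `V`. -/
structure QuiverData (V E : Type) where
  src : E → V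
  tgt : E → V

namespace QuiverData

variable {V E : Type} (Q : QuiverData V E)

/-- `l` is the list of arrows of a path of `Q`. -/
def IsPath (l : List E) : Prop := l.Chain' fun a b => Q.tgt a = Q.src b

/-- Two paths are composable: the target of the first equals the source of
the second (vacuously true if one of them is trivial). -/
def Composable (l m : List E) : Prop :=
  ∀ a ∈ l.getLast?, ∀ b ∈ m.head?, Q.tgt a = Q.src b

end QuiverData

/-- A monomial algebra, encoded combinatorially: a finite quiver together with
the set `F` of minimal paths generating the admissible monomial ideal `I`. -/
structure MonomialData (V E : Type) extends QuiverData V E where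
  F : Set (List E)
  F_path : ∀ f ∈ F, toQuiverData.IsPath f
  F_len : ∀ f ∈ F, 2 ≤ f.length
  F_min : ∀ f ∈ F, ∀ g, g <:+: f → (∃ f' ∈ F, f' <:+: g) → g = f
  admissible : ∃ N, ∀ l, toQuiverData.IsPath l → N ≤ l.length → ∃ f ∈ F, f <:+: l

namespace MonomialData

variable {V E : Type} (M : MonomialData V E)

/-- The path `l` is zero in `Λ`. -/
def IsZero (l : List E) : Prop := ∃ f ∈ M.F, f <:+: l

/-- `l` is a path which is nonzero in `Λ`. -/
def Nonzero (l : List E) : Prop := M.toQuiverData.IsPath l ∧ ¬ M.IsZero l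

/-- A perfect pair of nonzero nontrivial paths, after Chen–Shen–Zhou. -/
def PerfectPair (p q : List E) : Prop :=
  p ≠ [] ∧ q ≠ [] ∧ M.Nonzero p ∧ M.Nonzero q ∧
  M.toQuiverData.Composable p q ∧ M.IsZero (p ++ q) ∧
  (∀ q', q' ≠ [] → M.Nonzero q' → M.toQuiverData.Composable p q' →
      M.IsZero (p ++ q') → q <+: q') ∧
  (∀ p', p' ≠ [] → M.Nonzero p' → M.toQuiverData.Composable p' q →
      M.IsZero (p' ++ q) → p <:+ p')

/-- A perfect path: a path appearing in a perfect path sequence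
`(p₁, …, pₙ, pₙ₊₁ = p₁)`, encoded by a periodic sequence of paths each of
whose consecutive pairs is perfect. -/
def IsPerfect (p : List E) : Prop :=
  ∃ (n : ℕ) (s : ℕ → List E), 0 < n ∧ s 0 = p ∧ (∀ i, s (i + n) = s i) ∧
    ∀ i, M.PerfectPair (s i) (s (i + 1))

/-- `c` is the underlying cycle associated with the perfect path `p`:
the shortest cycle `c` with `p₁ ⋯ pₙ = cˡ` for some `l > 0`, for a perfect
path sequence through `p`. -/
def IsUnderlyingCycleOf (c p : List E) : Prop :=
  ∃ (n : ℕ) (s : ℕ → List E), 0 < n ∧ s 0 = p ∧ (∀ i, s (i + n) = s i) ∧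
    (∀ i, M.PerfectPair (s i) (s (i + 1))) ∧
    (∃ l, 0 < l ∧ ((List.range n).map s).flatten = (List.replicate l c).flatten) ∧
    (∀ c' l', 0 < l' → ((List.range n).map s).flatten = (List.replicate l' c').flatten →
      c.length ≤ c'.length)


/-- There is an overlap between the perfect paths `p` and `q` (`p` overlaps `q`). -/
def Overlap (p q : List E) : Prop :=
  ∃ x p' q' : List E, x ≠ [] ∧ p = p' ++ x ∧ q = x ++ q' ∧
    M.Nonzero (p' ++ x ++ q') ∧ (p = q → p' ≠ [] ∧ q' ≠ [])

/-- An elementary perfect path: a source in the Hasse quiver of the left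
divisibility order `⪯` on perfect paths, i.e. it is not a proper left divisor
of any perfect path. -/
def Elementary (p : List E) : Prop :=
  M.IsPerfect p ∧ ¬ ∃ q, M.IsPerfect q ∧ p <+: q ∧ p ≠ q

/-- A co-elementary perfect path: a sink in the Hasse quiver of `⪯`, i.e.
no proper left divisor of it is perfect. -/
def CoElementary (p : List E) : Prop :=
  M.IsPerfect p ∧ ¬ ∃ q, M.IsPerfect q ∧ q <+: p ∧ q ≠ p

/-- There is an arrow `q ⟶ p` in the Hasse quiver of `(ℙ_Λ, ⪯)`:
`p ≺ q` and no perfect path lies strictly between them. -/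
def HasseArrowPrec (q p : List E) : Prop :=
  M.IsPerfect p ∧ M.IsPerfect q ∧ p <+: q ∧ p ≠ q ∧
    ¬ ∃ r, M.IsPerfect r ∧ p <+: r ∧ p ≠ r ∧ r <+: q ∧ r ≠ q

end MonomialData

/-- Two cycles are equivalent (agree up to cyclic permutation): each is a
subpath of a power of the other. -/
def CyclesEquiv {E : Type} (c d : List E) : Prop :=
  ∃ m k, 0 < m ∧ 0 < k ∧ c <:+: (List.replicate m d).flatten ∧
    d <:+: (List.replicate k c).flatten


/-! ### Auxiliary lemmas for the proof -/
namespace OverlapAux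

open List

lemma head?_of_prefix {α : Type*} {l m : List α} (h : l <+: m) (hl : l ≠ []) :
    m.head? = l.head? := by
  obtain ⟨r, rfl⟩ := h
  cases l with
  | nil => exact absurd rfl hl
  | cons a l => rfl

lemma getLast?_of_suffix {α : Type*} {l m : List α} (h : l <:+ m) (hl : l ≠ []) :
    m.getLast? = l.getLast? := by
  obtain ⟨r, rfl⟩ := h
  rw [List.getLast?_append, Option.or_of_isSome (List.getLast?_isSome.mpr hl)]

variable {V E : Type} {M : MonomialData V E}

lemma isPath_infix {l m : List E} (hm : M.toQuiverData.IsPath m) (h : l <:+: m) :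
    M.toQuiverData.IsPath l := List.IsChain.infix hm h

lemma nonzero_of_infix {l m : List E} (hm : M.Nonzero m) (h : l <:+: m) : M.Nonzero l :=
  ⟨isPath_infix hm.1 h, fun ⟨f, hf, hfl⟩ => hm.2 ⟨f, hf, hfl.trans h⟩⟩

lemma nonzero_of_proper_infix_F {f g : List E} (hf : f ∈ M.F) (hg : g <:+: f)
    (hlt : g.length < f.length) : M.Nonzero g := by
  refine ⟨isPath_infix (M.F_path f hf) hg, ?_⟩
  rintro ⟨f', hf', hf'g⟩
  have := M.F_min f hf g hg ⟨f', hf', hf'g⟩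
  simp [this] at hlt

/-- For a perfect pair, the concatenation is itself a minimal relation. -/
lemma mem_F_of_perfectPair {Q B : List E} (h : M.PerfectPair Q B) : Q ++ B ∈ M.F := by
  obtain ⟨hQne, hBne, hQ, hB, hcomp, hzero, hmin7, hmin8⟩ := h
  obtain ⟨f, hfF, L, R, hLR⟩ := hzero
  -- first: R = []
  have hR : R = [] := by
    by_contra hR
    have hRpos : 0 < R.length := List.length_pos_iff.mpr hR
    have hflen : 0 < f.length := by have := M.F_len f hfF; omega
    have hLflen : Q.length < L.length + f.length := by
      by_contra hle
      push_neg at hle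
      have h1 : L ++ f <+: Q ++ B := ⟨R, by simpa [List.append_assoc] using hLR⟩
      have h2 : L ++ f <+: Q :=
        List.prefix_of_prefix_length_le h1 (List.prefix_append _ _) (by simpa using hle)
      exact hQ.2 ⟨f, hfF, ((List.suffix_append L f).isInfix).trans h2.isInfix⟩
    have hlen2 := congrArg List.length hLR
    simp only [List.length_append] at hlen2
    set k := L.length + f.length - Q.length with hk
    set B₁ := B.take k with hB₁
    have hk1 : 0 < k := by omega
    have hk2 : k < B.length := by omega
    have hB₁len : B₁.length = k := by simp [hB₁]; omega
    have hQB₁ : Q ++ B₁ = L ++ f := by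
      have e1 : Q ++ B₁ = (Q ++ B).take (Q.length + k) := (List.take_length_add_append k).symm
      have e2 : Q.length + k = (L ++ f).length := by simp; omega
      rw [e1, ← hLR, e2, List.take_left]
    have hzero₁ : M.IsZero (Q ++ B₁) :=
      ⟨f, hfF, by rw [hQB₁]; exact (List.suffix_append L f).isInfix⟩
    have hB₁pre : B₁ <+: B := List.take_prefix k B
    have hB₁ne : B₁ ≠ [] := by
      intro h; rw [h] at hB₁len; simp at hB₁len; omega
    have hB₁nz : M.Nonzero B₁ := nonzero_of_infix hB hB₁pre.isInfix
    have hcomp₁ : M.toQuiverData.Composable Q B₁ := by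
      intro a ha b hb
      exact hcomp a ha b (by rw [head?_of_prefix hB₁pre hB₁ne]; exact hb)
    have := (hmin7 B₁ hB₁ne hB₁nz hcomp₁ hzero₁).length_le
    omega
  subst hR
  simp only [List.append_nil] at hLR
  have hL : L = [] := by
    by_contra hL
    have hLpos : 0 < L.length := List.length_pos_iff.mpr hL
    have hLlen : L.length < Q.length := by
      by_contra hge
      push_neg at hge
      have h1 : f <:+ Q ++ B := ⟨L, hLR⟩
      have hlen2 := congrArg List.length hLR
      simp only [List.length_append] at hlen2
      have h2 : f <:+ B :=
        List.suffix_of_suffix_length_le h1 (List.suffix_append Q B) (by omega)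
      exact hB.2 ⟨f, hfF, h2.isInfix⟩
    have hLQ : L <+: Q := by
      have h1 : L <+: Q ++ B := ⟨f, hLR⟩
      exact List.prefix_of_prefix_length_le h1 (List.prefix_append Q B) (le_of_lt hLlen)
    obtain ⟨P'', hP''⟩ := hLQ
    have hP''ne : P'' ≠ [] := by
      intro h
      rw [h, List.append_nil] at hP''
      rw [hP''] at hLlen
      omega
    have hP''B : P'' ++ B = f := by
      have : L ++ (P'' ++ B) = L ++ f := by
        rw [← List.append_assoc, hP'', hLR]
      exact List.append_cancel_left this
    have hP''suf : P'' <:+ Q := ⟨L, hP''⟩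
    have hP''nz : M.Nonzero P'' := nonzero_of_infix hQ hP''suf.isInfix
    have hcomp'' : M.toQuiverData.Composable P'' B := by
      intro a ha b hb
      refine hcomp a ?_ b hb
      rw [getLast?_of_suffix hP''suf hP''ne]; exact ha
    have hzero'' : M.IsZero (P'' ++ B) := ⟨f, hfF, by rw [hP''B]⟩
    have hlen8 := (hmin8 P'' hP''ne hP''nz hcomp'' hzero'').length_le
    have hlen9 := congrArg List.length hP''
    simp only [List.length_append] at hlen9
    omega
  subst hL
  rw [List.nil_append] at hLR
  rwa [hLR] at hfF

/-- Key step lemma: an overlap between consecutive perfect pairs propagates. -/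
lemma step {A B σ x S : List E}
    (hPA : M.PerfectPair (σ ++ x) A) (hQB : M.PerfectPair (x ++ S) B)
    (hx : x ≠ []) (hnz : M.Nonzero (σ ++ x ++ S)) :
    ∃ x₂ S', x₂ ≠ [] ∧ A = S ++ x₂ ∧ B = x₂ ++ S' ∧ M.Nonzero (S ++ x₂ ++ S') := by
  have hg : (x ++ S) ++ B ∈ M.F := mem_F_of_perfectPair hQB
  obtain ⟨hPne, hAne, hPnz, hAnz, hcompPA, hPAzero, hmin7, hmin8⟩ := hPA
  obtain ⟨hQne, hBne, hQnz, hBnz, hcompQB, hQBzero, hmin7', hmin8'⟩ := hQB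
  have hxlen : 0 < x.length := List.length_pos_iff.mpr hx
  have hSB_suf : S ++ B <:+ (x ++ S) ++ B := by
    rw [List.append_assoc]; exact List.suffix_append x (S ++ B)
  have hSB_inf : S ++ B <:+: (x ++ S) ++ B := hSB_suf.isInfix
  have hSBnz : M.Nonzero (S ++ B) :=
    nonzero_of_proper_infix_F hg hSB_inf (by simp; omega)
  have hSBne : S ++ B ≠ [] := by simp [hBne]
  have hcomp : M.toQuiverData.Composable (σ ++ x) (S ++ B) := by
    intro a ha b hb
    have ha' : a ∈ x.getLast? := by
      rwa [getLast?_of_suffix (List.suffix_append σ x) hx] at ha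
    cases S with
    | nil =>
      have hb' : b ∈ B.head? := by simpa using hb
      refine hcompQB a ?_ b hb'
      rw [List.append_nil]; exact ha'
    | cons sh st =>
      have hQpath : M.toQuiverData.IsPath (x ++ (sh :: st)) := hQnz.1
      obtain rfl : sh = b := by simpa using hb
      exact (List.isChain_append.mp hQpath).2.2 a ha' sh rfl
  have hzero : M.IsZero ((σ ++ x) ++ (S ++ B)) :=
    ⟨(x ++ S) ++ B, hg, ⟨σ, [], by simp [List.append_assoc]⟩⟩
  have hApre : A <+: S ++ B := hmin7 _ hSBne hSBnz hcomp hzero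
  have hlen : S.length < A.length := by
    by_contra hle
    push_neg at hle
    have hAS : A <+: S := List.prefix_of_prefix_length_le hApre (List.prefix_append S B) hle
    apply hnz.2
    obtain ⟨f', hf', hinf⟩ := hPAzero
    refine ⟨f', hf', hinf.trans ?_⟩
    obtain ⟨r, hr⟩ := hAS
    have hpre : (σ ++ x) ++ A <+: σ ++ x ++ S := by
      refine ⟨r, ?_⟩
      rw [List.append_assoc (σ ++ x) A r, hr]
    exact hpre.isInfix
  have hSA : S <+: A :=
    List.prefix_of_prefix_length_le (List.prefix_append S B) hApre (le_of_lt hlen)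
  obtain ⟨x₂, rfl⟩ := hSA
  have hx₂ne : x₂ ≠ [] := by
    intro h; rw [h] at hlen; simp at hlen
  have hx₂B : x₂ <+: B := by
    obtain ⟨r, hr⟩ := hApre
    rw [List.append_assoc] at hr
    exact ⟨r, List.append_cancel_left hr⟩
  obtain ⟨S', rfl⟩ := hx₂B
  refine ⟨x₂, S', hx₂ne, rfl, rfl, ?_⟩
  rw [List.append_assoc]
  exact hSBnz


/-! Word powers. -/

/-- The concatenation of the first `K` paths of the sequence `s`. -/
def W {E : Type} (s : ℕ → List E) (K : ℕ) : List E := ((List.range K).map s).flatten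

lemma W_succ {E : Type} (s : ℕ → List E) (K : ℕ) : W s (K + 1) = W s K ++ s K := by
  simp [W, List.range_succ]

lemma W_mono {E : Type} (s : ℕ → List E) {K K' : ℕ} (h : K ≤ K') : W s K <+: W s K' := by
  obtain ⟨D, rfl⟩ := Nat.exists_eq_add_of_le h
  rw [W, W, List.range_add, List.map_append, List.flatten_append]
  exact List.prefix_append _ _

lemma W_length {E : Type} {s : ℕ → List E} (hne : ∀ i, s i ≠ []) (K : ℕ) :
    K ≤ (W s K).length := by
  induction K with
  | zero => simp
  | succ K ih =>
    rw [W_succ]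
    have := List.length_pos_iff.mpr (hne K)
    simp only [List.length_append]
    omega

lemma s_period {E : Type} {s : ℕ → List E} {n : ℕ} (hper : ∀ i, s (i + n) = s i)
    (i R : ℕ) : s (i + n * R) = s i := by
  induction R with
  | zero => simp
  | succ R ih =>
    have h1 : i + n * (R + 1) = (i + n * R) + n := by ring
    rw [h1, hper (i + n * R), ih]

lemma W_pow {E : Type} {s : ℕ → List E} {n : ℕ} (hper : ∀ i, s (i + n) = s i) (R : ℕ) :
    W s (n * R) = (List.replicate R (W s n)).flatten := by
  induction R with
  | zero => simp [W]
  | succ R ih =>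
    have h1 : n * (R + 1) = n * R + n := by ring
    rw [h1, W, List.range_add, List.map_append, List.flatten_append, ← W]
    have h2 : (List.range n).map (fun x => s (n * R + x)) = (List.range n).map s := by
      refine List.map_congr_left fun i _ => ?_
      rw [Nat.add_comm]
      exact s_period hper i R
    rw [List.map_map]
    have h3 : (s ∘ fun x => n * R + x) = fun x => s (n * R + x) := rfl
    rw [h3, h2, ← W, ih, List.replicate_succ', List.flatten_append]
    simp

lemma flatten_replicate_flatten {E : Type} (R L : ℕ) (c : List E) :
    (List.replicate R ((List.replicate L c).flatten)).flatten
      = (List.replicate (R * L) c).flatten := by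
  induction R with
  | zero => simp
  | succ R ih =>
    rw [List.replicate_succ, List.flatten_cons, ih,
      show (R + 1) * L = L + R * L by ring, List.replicate_add, List.flatten_append]

end OverlapAux


/-- if two perfect paths overlap then their underlying cycles
are equivalent. -/
theorem overlap_underlyingCycles_equiv {V E : Type} (M : MonomialData V E)
    (p q c d : List E) (hp : M.IsPerfect p) (hq : M.IsPerfect q)
    (hov : M.Overlap p q)
    (hc : M.IsUnderlyingCycleOf c p) (hd : M.IsUnderlyingCycleOf d q) :
    CyclesEquiv c d := by
  classical
  obtain ⟨n, s, hn, hs0, hsper, hspair, ⟨l, hl, hflat⟩, -⟩ := hc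
  obtain ⟨n', t, hn', ht0, htper, htpair, ⟨l', hl', hflat'⟩, -⟩ := hd
  obtain ⟨x, p₀, q₀, hxne, hpeq, hqeq, hovnz, -⟩ := hov
  have hsne : ∀ i, s i ≠ [] := fun i => (hspair i).1
  have htne : ∀ i, t i ≠ [] := fun i => (htpair i).1
  have hWsn : OverlapAux.W s n = (List.replicate l c).flatten := hflat
  have hWtn' : OverlapAux.W t n' = (List.replicate l' d).flatten := hflat'
  -- the overlap propagates forever along the two perfect path sequences
  have inv : ∀ k, ∃ σ x' S, x' ≠ [] ∧ s k = σ ++ x' ∧ t k = x' ++ S ∧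
      M.Nonzero (σ ++ x' ++ S) ∧
      OverlapAux.W s (k + 1) ++ S = p₀ ++ OverlapAux.W t (k + 1) := by
    intro k
    induction k with
    | zero =>
      refine ⟨p₀, x, q₀, hxne, by rw [hs0, hpeq], by rw [ht0, hqeq], hovnz, ?_⟩
      rw [OverlapAux.W_succ, OverlapAux.W_succ]
      simp [OverlapAux.W, hs0, ht0, hpeq, hqeq, List.append_assoc]
    | succ k ih =>
      obtain ⟨σ, x', S, hx'ne, hsk, htk, hnz, halign⟩ := ih
      have hpairS := hspair k
      have hpairT := htpair k
      rw [hsk] at hpairS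
      rw [htk] at hpairT
      obtain ⟨x₂, S', hx₂ne, hA, hB, hnz'⟩ := OverlapAux.step hpairS hpairT hx'ne hnz
      refine ⟨S, x₂, S', hx₂ne, hA, hB, hnz', ?_⟩
      rw [OverlapAux.W_succ s (k + 1), OverlapAux.W_succ t (k + 1), hA, hB]
      calc OverlapAux.W s (k + 1) ++ (S ++ x₂) ++ S'
          = (OverlapAux.W s (k + 1) ++ S) ++ (x₂ ++ S') := by
            simp [List.append_assoc]
        _ = (p₀ ++ OverlapAux.W t (k + 1)) ++ (x₂ ++ S') := by rw [halign]
        _ = p₀ ++ (OverlapAux.W t (k + 1) ++ (x₂ ++ S')) := by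
            simp [List.append_assoc]
  have align : ∀ K, 0 < K → ∃ S, OverlapAux.W s K ++ S = p₀ ++ OverlapAux.W t K := by
    intro K hK
    obtain ⟨σ, x', S, _, _, _, _, h⟩ := inv (K - 1)
    refine ⟨S, ?_⟩
    rwa [Nat.sub_add_cancel hK] at h
  -- `p₀` is shorter than one period of `W s`
  have hp0len : p₀.length < (OverlapAux.W s n).length := by
    have h1 : OverlapAux.W s 1 <+: OverlapAux.W s n := OverlapAux.W_mono s hn
    have h2 : OverlapAux.W s 1 = s 0 := by
      rw [OverlapAux.W_succ]
      simp [OverlapAux.W]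
    have h3 : p₀.length < p.length := by
      rw [hpeq, List.length_append]
      have := List.length_pos_iff.mpr hxne
      omega
    have h4 := h1.length_le
    rw [h2, hs0] at h4
    omega
  -- direction 1 : c is an infix of a power of d
  obtain ⟨S₁, hS₁⟩ := align (2 * n) (by omega)
  have h2n : OverlapAux.W s (2 * n) = OverlapAux.W s n ++ OverlapAux.W s n := by
    have h := OverlapAux.W_pow hsper 2
    rw [show n * 2 = 2 * n by ring] at h
    rw [h]
    simp
  have hQ2n : OverlapAux.W t (2 * n)
      = (OverlapAux.W s n).drop p₀.length ++ (OverlapAux.W s n ++ S₁) := by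
    have e : p₀ ++ OverlapAux.W t (2 * n) = (OverlapAux.W s n ++ OverlapAux.W s n) ++ S₁ := by
      rw [← h2n]; exact hS₁.symm
    have e2 := congrArg (List.drop p₀.length) e
    rw [List.drop_left] at e2
    rw [List.append_assoc, List.drop_append,
      Nat.sub_eq_zero_of_le (le_of_lt hp0len), List.drop_zero] at e2
    exact e2
  have hcPn : c <+: OverlapAux.W s n := by
    obtain ⟨l₀, rfl⟩ : ∃ l₀, l = l₀ + 1 := ⟨l - 1, by omega⟩
    rw [hWsn, List.replicate_succ, List.flatten_cons]
    exact List.prefix_append _ _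
  have hcinf : c <:+: OverlapAux.W t (2 * n) := by
    refine List.IsInfix.trans hcPn.isInfix ?_
    rw [hQ2n]
    exact ⟨(OverlapAux.W s n).drop p₀.length, S₁, List.append_assoc _ _ _⟩
  have hcdir : c <:+: (List.replicate (2 * n * l') d).flatten := by
    refine hcinf.trans ?_
    have hmono : OverlapAux.W t (2 * n) <+: OverlapAux.W t (n' * (2 * n)) :=
      OverlapAux.W_mono t (Nat.le_mul_of_pos_left _ hn')
    refine hmono.isInfix.trans ?_
    rw [OverlapAux.W_pow htper (2 * n), hWtn', OverlapAux.flatten_replicate_flatten]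
  -- direction 2 : d is an infix of a power of c
  have hdQn' : d <+: OverlapAux.W t n' := by
    obtain ⟨l₀', rfl⟩ : ∃ l₀, l' = l₀ + 1 := ⟨l' - 1, by omega⟩
    rw [hWtn', List.replicate_succ, List.flatten_cons]
    exact List.prefix_append _ _
  set K₀ := p₀.length + (OverlapAux.W t n').length + 1 with hK₀
  have hn'K₀ : n' ≤ K₀ := by
    have := OverlapAux.W_length htne n'
    omega
  obtain ⟨S₂, hS₂⟩ := align K₀ (by omega)
  have h1 : p₀ ++ OverlapAux.W t n' <+: p₀ ++ OverlapAux.W t K₀ := by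
    obtain ⟨r, hr⟩ := OverlapAux.W_mono t hn'K₀
    exact ⟨r, by rw [List.append_assoc, hr]⟩
  have h2 : OverlapAux.W s K₀ <+: p₀ ++ OverlapAux.W t K₀ := ⟨S₂, hS₂⟩
  have h3 : p₀ ++ OverlapAux.W t n' <+: OverlapAux.W s K₀ := by
    refine List.prefix_of_prefix_length_le h1 h2 ?_
    have := OverlapAux.W_length hsne K₀
    simp only [List.length_append]
    omega
  have h4 : OverlapAux.W t n' <:+: OverlapAux.W s K₀ :=
    (List.suffix_append p₀ _).isInfix.trans h3.isInfix
  have hddir : d <:+: (List.replicate (K₀ * l) c).flatten := by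
    refine (hdQn'.isInfix.trans h4).trans ?_
    have hmono : OverlapAux.W s K₀ <+: OverlapAux.W s (n * K₀) :=
      OverlapAux.W_mono s (Nat.le_mul_of_pos_left _ hn)
    refine hmono.isInfix.trans ?_
    rw [OverlapAux.W_pow hsper K₀, hWsn, OverlapAux.flatten_replicate_flatten]
  exact ⟨2 * n * l', K₀ * l, Nat.mul_pos (by omega) hl', Nat.mul_pos (by omega) hl,
    hcdir, hddir⟩
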